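/- If codewords A_t satisfy a prefix-free constraint (either unconditionally, or conditionally on every realization of (Aᵗ⁻¹, Dᵗ, Uᵗ⁻¹)), then (1/(T+1))·Σ_{t=0}^{T} E[ℓ(A_t)] ≥ (1/(T+1))·I(X^T → A^T ‖ D^T, U₊^T). -/

import Mathlib

open scoped Classical
open Finset

noncomputable def prob {Ω : Type} [Fintype Ω] (p : Ω → ℝ) (E : Ω → Prop) : ℝ :=
  ∑ ω, if E ω then p ω else 0

noncomputable def plog (q : ℝ) : ℝ := if q = 0 then 0 else -q * Real.logb 2 q

/-- Shannon entropy (in bits) of a random variable `X` on a finite space with pmf `p`. -/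
noncomputable def entropy {Ω α : Type} [Fintype Ω] (p : Ω → ℝ) (X : Ω → α) : ℝ :=
  ∑ x ∈ Finset.univ.image X, plog (prob p (fun ω => X ω = x))

/-- Conditional entropy `H(A|Z) = H(A,Z) - H(Z)` (in bits). -/
noncomputable def condEntropy {Ω α β : Type} [Fintype Ω] (p : Ω → ℝ) (A : Ω → α) (Z : Ω → β) : ℝ :=
  entropy p (fun ω => (A ω, Z ω)) - entropy p Z

/-- Mutual information `I(X;Y)` (in bits). -/
noncomputable def mutualInfo {Ω α β : Type} [Fintype Ω] (p : Ω → ℝ) (X : Ω → α) (Y : Ω → β) : ℝ :=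
  entropy p X + entropy p Y - entropy p (fun ω => (X ω, Y ω))

/-- Conditional mutual information `I(X;Y|Z) = H(X|Z) - H(X|Y,Z)` (in bits). -/
noncomputable def condMutualInfo {Ω α β γ : Type} [Fintype Ω] (p : Ω → ℝ)
    (X : Ω → α) (Y : Ω → β) (Z : Ω → γ) : ℝ :=
  condEntropy p X Z - condEntropy p X (fun ω => (Y ω, Z ω))

/-- Expected codeword length `E[ℓ(A)]`. -/
noncomputable def expLen {Ω : Type} [Fintype Ω] (p : Ω → ℝ) (A : Ω → List Bool) : ℝ :=
  ∑ ω, p ω * (A ω).length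

/-- θ(x) = x + (1+x)·log₂(1+x) − x·log₂(x); note `Real.logb 2 0 = 0`, so θ(0) = 0. -/
noncomputable def theta (x : ℝ) : ℝ :=
  x + (1 + x) * Real.logb 2 (1 + x) - x * Real.logb 2 x

/-- The inverse of θ on `[0,∞)`. -/
noncomputable def thetaInv : ℝ → ℝ := Function.invFunOn theta (Set.Ici 0)

/-- History `(X_0, …, X_{t-1})` of a discrete-time process. -/
def hist {Ω α : Type} (X : ℕ → Ω → α) (t : ℕ) (ω : Ω) : Fin t → α := fun i => X i ω

section Aux


variable {Ω α β : Type} [Fintype Ω] (p : Ω → ℝ)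

lemma plog_eq (q : ℝ) : plog q = q * (-Real.logb 2 q) := by
  unfold plog; split
  · simp_all
  · ring

lemma prob_nonneg (hp : ∀ ω, 0 ≤ p ω) (E : Ω → Prop) : 0 ≤ prob p E := by
  refine Finset.sum_nonneg fun ω _ => ?_
  split <;> simp [hp ω]

lemma prob_mono (hp : ∀ ω, 0 ≤ p ω) {E F : Ω → Prop} (h : ∀ ω, E ω → F ω) :
    prob p E ≤ prob p F := by
  refine Finset.sum_le_sum fun ω _ => ?_
  by_cases hE : E ω
  · rw [if_pos hE, if_pos (h ω hE)]
  · rw [if_neg hE]; split <;> simp [hp ω]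

lemma le_prob (hp : ∀ ω, 0 ≤ p ω) {E : Ω → Prop} {ω₀ : Ω} (hE : E ω₀) : p ω₀ ≤ prob p E := by
  have := Finset.single_le_sum (f := fun ω => if E ω then p ω else 0)
    (fun ω _ => by split <;> simp [hp ω]) (Finset.mem_univ ω₀)
  simpa [hE, prob] using this

lemma sum_group (X : Ω → α) (c : α → ℝ) :
    ∑ ω, p ω * c (X ω) = ∑ x ∈ Finset.univ.image X, prob p (fun ω => X ω = x) * c x := by
  unfold prob
  simp only [Finset.sum_mul, ite_mul, zero_mul]
  rw [Finset.sum_comm]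
  refine Finset.sum_congr rfl fun ω _ => ?_
  rw [Finset.sum_ite_eq, if_pos (Finset.mem_image_of_mem X (Finset.mem_univ ω))]

lemma entropy_eq (X : Ω → α) :
    entropy p X = ∑ ω, p ω * (-Real.logb 2 (prob p (fun ω' => X ω' = X ω))) := by
  have h := sum_group p X (fun x => -Real.logb 2 (prob p (fun ω => X ω = x)))
  rw [entropy]
  exact Eq.trans (Finset.sum_congr rfl fun x _ => plog_eq _) h.symm

lemma sum_prob_image (hsum : ∑ ω, p ω = 1) (X : Ω → α) :
    ∑ x ∈ Finset.univ.image X, prob p (fun ω => X ω = x) = 1 := by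
  have := sum_group p X (fun _ => (1 : ℝ))
  simpa [hsum] using this.symm

lemma entropy_mono (hp : ∀ ω, 0 ≤ p ω) {V : Ω → α} {W : Ω → β}
    (h : ∀ ω ω', W ω' = W ω → V ω' = V ω) : entropy p V ≤ entropy p W := by
  rw [entropy_eq, entropy_eq]
  refine Finset.sum_le_sum fun ω _ => ?_
  by_cases hω : p ω = 0
  · simp [hω]
  have hpω : 0 < p ω := lt_of_le_of_ne (hp ω) (Ne.symm hω)
  have hW : 0 < prob p (fun ω' => W ω' = W ω) := lt_of_lt_of_le hpω (le_prob p hp rfl)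
  have hle : prob p (fun ω' => W ω' = W ω) ≤ prob p (fun ω' => V ω' = V ω) :=
    prob_mono p hp (fun ω' hw => h ω ω' hw)
  have := Real.logb_le_logb_of_le (b := 2) one_lt_two hW hle
  nlinarith
  
lemma sum_mul_logb_le (hp : ∀ ω, 0 ≤ p ω) (hsum : ∑ ω, p ω = 1) (f : Ω → ℝ)
    (hf : ∀ ω, p ω ≠ 0 → 0 < f ω) (hsf : ∑ ω, p ω * f ω ≤ 1) :
    ∑ ω, p ω * Real.logb 2 (f ω) ≤ 0 := by
  have h2 : (0:ℝ) < Real.log 2 := Real.log_pos one_lt_two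
  have key : ∀ ω ∈ Finset.univ, p ω * Real.logb 2 (f ω) ≤ p ω * (f ω - 1) / Real.log 2 := by
    intro ω _
    by_cases h : p ω = 0
    · simp [h]
    · have hf' := hf ω h
      have hlog : Real.log (f ω) ≤ f ω - 1 := Real.log_le_sub_one_of_pos hf'
      have hpω : 0 < p ω := lt_of_le_of_ne (hp ω) (Ne.symm h)
      rw [Real.logb, mul_div_assoc]
      have : Real.log (f ω) / Real.log 2 ≤ (f ω - 1) / Real.log 2 :=
        div_le_div_of_nonneg_right hlog h2.le
      exact mul_le_mul_of_nonneg_left this hpω.le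
  calc ∑ ω, p ω * Real.logb 2 (f ω) ≤ ∑ ω, p ω * (f ω - 1) / Real.log 2 :=
        Finset.sum_le_sum key
    _ = ((∑ ω, p ω * f ω) - 1) / Real.log 2 := by
        rw [← Finset.sum_div]
        congr 1
        simp only [mul_sub, mul_one, Finset.sum_sub_distrib, hsum]
    _ ≤ 0 := div_nonpos_of_nonpos_of_nonneg (by linarith) h2.le



lemma kraft (S : Finset (List Bool))
    (h : ∀ a₁ ∈ S, ∀ a₂ ∈ S, a₁ ≠ a₂ → ¬ a₁ <+: a₂) :
    ∑ a ∈ S, ((2:ℝ)⁻¹) ^ a.length ≤ 1 := by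
  set L := S.sup List.length with hL
  have hlen : ∀ a ∈ S, a.length ≤ L := fun a ha => Finset.le_sup ha
  set E : List Bool → Finset (List Bool) := fun a =>
    (Finset.univ : Finset (Fin (L - a.length) → Bool)).image (fun s => a ++ List.ofFn s) with hE
  have hofn_inj : ∀ (n : ℕ), Function.Injective (fun s : Fin n → Bool => List.ofFn s) := by
    intro n s₁ s₂ hs
    simpa using hs
  have hcard : ∀ a, (E a).card = 2 ^ (L - a.length) := by
    intro a
    rw [hE]
    rw [Finset.card_image_of_injective _
      (fun s₁ s₂ hs => hofn_inj _ (List.append_cancel_left hs))]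
    simp [Fintype.card_fun]
  have hmemlen : ∀ a ∈ S, ∀ l ∈ E a, l.length = L := by
    intro a ha l hl
    rw [hE] at hl
    obtain ⟨s, _, rfl⟩ := Finset.mem_image.mp hl
    have := hlen a ha
    simp only [List.length_append, List.length_ofFn]
    omega
  have hdisj : ∀ a₁ ∈ S, ∀ a₂ ∈ S, a₁ ≠ a₂ → Disjoint (E a₁) (E a₂) := by
    intro a₁ h₁ a₂ h₂ hne
    rw [Finset.disjoint_left]
    intro l hl₁ hl₂
    obtain ⟨s₁, _, rfl⟩ := Finset.mem_image.mp hl₁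
    obtain ⟨s₂, _, heq⟩ := Finset.mem_image.mp hl₂
    have hp₁ : a₁ <+: a₁ ++ List.ofFn s₁ := List.prefix_append _ _
    have hp₂ : a₂ <+: a₁ ++ List.ofFn s₁ := heq ▸ List.prefix_append a₂ (List.ofFn s₂)
    rcases le_total a₁.length a₂.length with hle | hle
    · exact h a₁ h₁ a₂ h₂ hne (List.prefix_of_prefix_length_le hp₁ hp₂ hle)
    · exact h a₂ h₂ a₁ h₁ (Ne.symm hne) (List.prefix_of_prefix_length_le hp₂ hp₁ hle)
  have hsub : S.biUnion E ⊆ (Finset.univ : Finset (Fin L → Bool)).image List.ofFn := by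
    intro l hl
    obtain ⟨a, ha, hla⟩ := Finset.mem_biUnion.mp hl
    have hlL : l.length = L := hmemlen a ha l hla
    refine Finset.mem_image.mpr ⟨fun i => l.get (Fin.cast hlL.symm i), Finset.mem_univ _, ?_⟩
    apply List.ext_get
    · simp [hlL]
    · intro n h1 h2
      simp [List.get_ofFn]
  have hcount : ∑ a ∈ S, 2 ^ (L - a.length) ≤ 2 ^ L := by
    calc ∑ a ∈ S, 2 ^ (L - a.length) = ∑ a ∈ S, (E a).card := by
          exact Finset.sum_congr rfl fun a _ => (hcard a).symm
      _ = (S.biUnion E).card := (Finset.card_biUnion hdisj).symm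
      _ ≤ ((Finset.univ : Finset (Fin L → Bool)).image List.ofFn).card :=
          Finset.card_le_card hsub
      _ ≤ (Finset.univ : Finset (Fin L → Bool)).card := Finset.card_image_le
      _ = 2 ^ L := by simp [Fintype.card_fun]
  have hterm : ∀ a ∈ S, ((2:ℝ)⁻¹) ^ a.length = (2:ℝ) ^ (L - a.length) / 2 ^ L := by
    intro a ha
    have h2L : (2:ℝ) ^ L = 2 ^ (L - a.length) * 2 ^ a.length := by
      rw [← pow_add]
      congr 1
      have := hlen a ha
      omega
    rw [inv_pow, eq_div_iff (by positivity), h2L]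
    field_simp
  calc ∑ a ∈ S, ((2:ℝ)⁻¹) ^ a.length = (∑ a ∈ S, (2:ℝ) ^ (L - a.length)) / 2 ^ L := by
        rw [Finset.sum_div]; exact Finset.sum_congr rfl hterm
    _ ≤ 1 := by
        rw [div_le_one (by positivity)]
        calc (∑ a ∈ S, (2:ℝ) ^ (L - a.length)) = ((∑ a ∈ S, 2 ^ (L - a.length) : ℕ) : ℝ) := by
              push_cast; ring
          _ ≤ ((2 ^ L : ℕ) : ℝ) := by exact_mod_cast hcount
          _ = 2 ^ L := by push_cast; ring

lemma prob_congr {E F : Ω → Prop} (h : ∀ ω, E ω ↔ F ω) : prob p E = prob p F := by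
  unfold prob
  exact Finset.sum_congr rfl fun ω _ => by rw [if_congr (h ω) rfl rfl]

lemma kraft_sum (A : Ω → List Bool) (Q : List Bool → ℝ)
    (hpf : ∀ a₁ a₂, 0 < Q a₁ → 0 < Q a₂ → a₁ ≠ a₂ → ¬ a₁ <+: a₂) :
    ∑ a ∈ Finset.univ.image A, (if 0 < Q a then ((2:ℝ)⁻¹) ^ a.length else 0) ≤ 1 := by
  rw [← Finset.sum_filter]
  exact kraft _ (fun a₁ h₁ a₂ h₂ hne =>
    hpf a₁ a₂ (Finset.mem_filter.mp h₁).2 (Finset.mem_filter.mp h₂).2 hne)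

lemma condEntropy_le_expLen (hp : ∀ ω, 0 ≤ p ω) (hsum : ∑ ω, p ω = 1)
    (A : Ω → List Bool) (Z : Ω → β)
    (hk : ∀ z, 0 < prob p (fun ω => Z ω = z) →
      ∑ a ∈ Finset.univ.image A,
        (if 0 < prob p (fun ω => A ω = a ∧ Z ω = z) then ((2:ℝ)⁻¹) ^ a.length else 0) ≤ 1) :
    condEntropy p A Z ≤ expLen p A := by
  have hpair : ∀ a z, prob p (fun ω => (A ω, Z ω) = (a, z))
      = prob p (fun ω => A ω = a ∧ Z ω = z) :=
    fun a z => prob_congr p (fun ω => by simp [Prod.ext_iff])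
  set f : Ω → ℝ := fun ω =>
    ((2:ℝ)⁻¹) ^ (A ω).length * prob p (fun ω' => Z ω' = Z ω) /
      prob p (fun ω' => (A ω', Z ω') = (A ω, Z ω)) with hf_def
  have hf : ∀ ω, p ω ≠ 0 → 0 < f ω := by
    intro ω h
    have hpω : 0 < p ω := lt_of_le_of_ne (hp ω) (Ne.symm h)
    have h1 : 0 < prob p (fun ω' => Z ω' = Z ω) := lt_of_lt_of_le hpω (le_prob p hp rfl)
    have h2 : 0 < prob p (fun ω' => (A ω', Z ω') = (A ω, Z ω)) :=
      lt_of_lt_of_le hpω (le_prob p hp rfl)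
    exact div_pos (mul_pos (by positivity) h1) h2
  -- step 1 : rewrite the difference
  have step1 : condEntropy p A Z - expLen p A = ∑ ω, p ω *
      (Real.logb 2 (prob p (fun ω' => Z ω' = Z ω))
        - Real.logb 2 (prob p (fun ω' => (A ω', Z ω') = (A ω, Z ω)))
        - ((A ω).length : ℝ)) := by
    rw [condEntropy, entropy_eq p (fun ω => (A ω, Z ω)), entropy_eq p Z, expLen,
      ← Finset.sum_sub_distrib, ← Finset.sum_sub_distrib]
    exact Finset.sum_congr rfl fun ω _ => by ring
  have step2 : ∀ ω, p ω *
      (Real.logb 2 (prob p (fun ω' => Z ω' = Z ω))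
        - Real.logb 2 (prob p (fun ω' => (A ω', Z ω') = (A ω, Z ω)))
        - ((A ω).length : ℝ)) = p ω * Real.logb 2 (f ω) := by
    intro ω
    by_cases h : p ω = 0
    · simp [h]
    have hpω : 0 < p ω := lt_of_le_of_ne (hp ω) (Ne.symm h)
    have h1 : 0 < prob p (fun ω' => Z ω' = Z ω) := lt_of_lt_of_le hpω (le_prob p hp rfl)
    have h2 : 0 < prob p (fun ω' => (A ω', Z ω') = (A ω, Z ω)) :=
      lt_of_lt_of_le hpω (le_prob p hp rfl)
    have hk0 : ((2:ℝ)⁻¹) ^ (A ω).length ≠ 0 := by positivity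
    have : Real.logb 2 (f ω) = Real.logb 2 (((2:ℝ)⁻¹) ^ (A ω).length)
        + Real.logb 2 (prob p (fun ω' => Z ω' = Z ω))
        - Real.logb 2 (prob p (fun ω' => (A ω', Z ω') = (A ω, Z ω))) := by
      rw [hf_def]
      rw [Real.logb_div (mul_ne_zero hk0 h1.ne') h2.ne', Real.logb_mul hk0 h1.ne']
    rw [this, Real.logb_pow, Real.logb_inv, Real.logb_self_eq_one one_lt_two]
    ring
  -- step 3 : Kraft bound on the expectation of f
  have step3 : ∑ ω, p ω * f ω ≤ 1 := by
    have hg := sum_group p (fun ω => (A ω, Z ω))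
      (fun x => ((2:ℝ)⁻¹) ^ x.1.length * prob p (fun ω => Z ω = x.2) /
        prob p (fun ω => (A ω, Z ω) = x))
    calc ∑ ω, p ω * f ω
        = ∑ x ∈ Finset.univ.image (fun ω => (A ω, Z ω)),
            prob p (fun ω => (A ω, Z ω) = x) *
              (((2:ℝ)⁻¹) ^ x.1.length * prob p (fun ω => Z ω = x.2) /
                prob p (fun ω => (A ω, Z ω) = x)) := by
          convert hg using 2
          congr!
      _ ≤ ∑ x ∈ (Finset.univ.image A) ×ˢ (Finset.univ.image Z),
            (if 0 < prob p (fun ω => A ω = x.1 ∧ Z ω = x.2) then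
              ((2:ℝ)⁻¹) ^ x.1.length * prob p (fun ω => Z ω = x.2) else 0) := by
          refine le_trans (Finset.sum_le_sum ?_) (Finset.sum_le_sum_of_subset_of_nonneg ?_ ?_)
          · rintro ⟨a, z⟩ _
            by_cases h0 : prob p (fun ω => A ω = a ∧ Z ω = z) = 0
            · rw [show prob p (fun ω => (A ω, Z ω) = (a, z)) = _ from hpair a z, h0]
              simp
            · have hpos : 0 < prob p (fun ω => A ω = a ∧ Z ω = z) :=
                lt_of_le_of_ne (prob_nonneg p hp _) (Ne.symm h0)
              rw [if_pos hpos, show prob p (fun ω => (A ω, Z ω) = (a, z)) = _ from hpair a z]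
              rw [mul_div_assoc']
              rw [mul_comm (prob p fun ω => A ω = a ∧ Z ω = z)]
              rw [mul_div_assoc, div_self h0, mul_one]
          · rintro ⟨a, z⟩ hx
            obtain ⟨ω, _, hω⟩ := Finset.mem_image.mp hx
            refine Finset.mem_product.mpr ⟨?_, ?_⟩
            · exact Finset.mem_image.mpr ⟨ω, Finset.mem_univ ω, congrArg Prod.fst hω⟩
            · exact Finset.mem_image.mpr ⟨ω, Finset.mem_univ ω, congrArg Prod.snd hω⟩
          · intro x _ _
            split
            · have := prob_nonneg p hp (fun ω => Z ω = x.2); positivity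
            · exact le_refl 0
      _ = ∑ z ∈ Finset.univ.image Z, ∑ a ∈ Finset.univ.image A,
            (if 0 < prob p (fun ω => A ω = a ∧ Z ω = z) then
              ((2:ℝ)⁻¹) ^ a.length * prob p (fun ω => Z ω = z) else 0) := by
          rw [Finset.sum_product]
          exact Finset.sum_comm
      _ ≤ ∑ z ∈ Finset.univ.image Z, prob p (fun ω => Z ω = z) := by
          refine Finset.sum_le_sum fun z _ => ?_
          have hrw : ∑ a ∈ Finset.univ.image A,
              (if 0 < prob p (fun ω => A ω = a ∧ Z ω = z) then
                ((2:ℝ)⁻¹) ^ a.length * prob p (fun ω => Z ω = z) else 0)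
              = prob p (fun ω => Z ω = z) * ∑ a ∈ Finset.univ.image A,
                (if 0 < prob p (fun ω => A ω = a ∧ Z ω = z) then
                  ((2:ℝ)⁻¹) ^ a.length else 0) := by
            rw [Finset.mul_sum]
            exact Finset.sum_congr rfl fun a _ => by split <;> ring
          rw [hrw]
          by_cases hz : 0 < prob p (fun ω => Z ω = z)
          · calc prob p (fun ω => Z ω = z) * _ ≤ prob p (fun ω => Z ω = z) * 1 :=
                  mul_le_mul_of_nonneg_left (hk z hz) hz.le
              _ = prob p (fun ω => Z ω = z) := mul_one _
          · have hz0 : prob p (fun ω => Z ω = z) = 0 :=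
              le_antisymm (not_lt.mp hz) (prob_nonneg p hp _)
            rw [hz0, zero_mul]
      _ = 1 := sum_prob_image p hsum Z
  have := sum_mul_logb_le p hp hsum f hf step3
  have hfin : condEntropy p A Z - expLen p A ≤ 0 := by
    rw [step1, Finset.sum_congr rfl fun ω _ => step2 ω]
    exact this
  linarith

lemma condEntropy_le_entropy (hp : ∀ ω, 0 ≤ p ω) (hsum : ∑ ω, p ω = 1)
    (A : Ω → α) (Z : Ω → β) : condEntropy p A Z ≤ entropy p A := by
  set f : Ω → ℝ := fun ω =>
    prob p (fun ω' => A ω' = A ω) * prob p (fun ω' => Z ω' = Z ω) /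
      prob p (fun ω' => (A ω', Z ω') = (A ω, Z ω)) with hf_def
  have hf : ∀ ω, p ω ≠ 0 → 0 < f ω := by
    intro ω h
    have hpω : 0 < p ω := lt_of_le_of_ne (hp ω) (Ne.symm h)
    have h0 : 0 < prob p (fun ω' => A ω' = A ω) := lt_of_lt_of_le hpω (le_prob p hp rfl)
    have h1 : 0 < prob p (fun ω' => Z ω' = Z ω) := lt_of_lt_of_le hpω (le_prob p hp rfl)
    have h2 : 0 < prob p (fun ω' => (A ω', Z ω') = (A ω, Z ω)) :=
      lt_of_lt_of_le hpω (le_prob p hp rfl)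
    exact div_pos (mul_pos h0 h1) h2
  have step1 : condEntropy p A Z - entropy p A = ∑ ω, p ω *
      (Real.logb 2 (prob p (fun ω' => A ω' = A ω))
        + Real.logb 2 (prob p (fun ω' => Z ω' = Z ω))
        - Real.logb 2 (prob p (fun ω' => (A ω', Z ω') = (A ω, Z ω)))) := by
    rw [condEntropy, entropy_eq p (fun ω => (A ω, Z ω)), entropy_eq p Z, entropy_eq p A,
      ← Finset.sum_sub_distrib, ← Finset.sum_sub_distrib]
    exact Finset.sum_congr rfl fun ω _ => by ring
  have step2 : ∀ ω, p ω *
      (Real.logb 2 (prob p (fun ω' => A ω' = A ω))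
        + Real.logb 2 (prob p (fun ω' => Z ω' = Z ω))
        - Real.logb 2 (prob p (fun ω' => (A ω', Z ω') = (A ω, Z ω))))
      = p ω * Real.logb 2 (f ω) := by
    intro ω
    by_cases h : p ω = 0
    · simp [h]
    have hpω : 0 < p ω := lt_of_le_of_ne (hp ω) (Ne.symm h)
    have h0 : 0 < prob p (fun ω' => A ω' = A ω) := lt_of_lt_of_le hpω (le_prob p hp rfl)
    have h1 : 0 < prob p (fun ω' => Z ω' = Z ω) := lt_of_lt_of_le hpω (le_prob p hp rfl)
    have h2 : 0 < prob p (fun ω' => (A ω', Z ω') = (A ω, Z ω)) :=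
      lt_of_lt_of_le hpω (le_prob p hp rfl)
    rw [hf_def]
    rw [Real.logb_div (mul_ne_zero h0.ne' h1.ne') h2.ne', Real.logb_mul h0.ne' h1.ne']
  have hpair : ∀ (a : α) (z : β), prob p (fun ω => (A ω, Z ω) = (a, z))
      = prob p (fun ω => A ω = a ∧ Z ω = z) :=
    fun a z => prob_congr p (fun ω => by simp [Prod.ext_iff])
  have step3 : ∑ ω, p ω * f ω ≤ 1 := by
    have hg := sum_group p (fun ω => (A ω, Z ω))
      (fun x => prob p (fun ω => A ω = x.1) * prob p (fun ω => Z ω = x.2) /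
        prob p (fun ω => (A ω, Z ω) = x))
    calc ∑ ω, p ω * f ω
        = ∑ x ∈ Finset.univ.image (fun ω => (A ω, Z ω)),
            prob p (fun ω => (A ω, Z ω) = x) *
              (prob p (fun ω => A ω = x.1) * prob p (fun ω => Z ω = x.2) /
                prob p (fun ω => (A ω, Z ω) = x)) := by
          convert hg using 2
          congr!
      _ ≤ ∑ x ∈ (Finset.univ.image A) ×ˢ (Finset.univ.image Z),
            prob p (fun ω => A ω = x.1) * prob p (fun ω => Z ω = x.2) := by
          refine le_trans (Finset.sum_le_sum ?_) (Finset.sum_le_sum_of_subset_of_nonneg ?_ ?_)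
          · rintro ⟨a, z⟩ _
            by_cases h0 : prob p (fun ω => (A ω, Z ω) = (a, z)) = 0
            · rw [h0, zero_mul]
              exact mul_nonneg (prob_nonneg p hp _) (prob_nonneg p hp _)
            · rw [mul_div_assoc', mul_comm (prob p fun ω => (A ω, Z ω) = (a, z)),
                mul_div_assoc, div_self h0, mul_one]
          · rintro ⟨a, z⟩ hx
            obtain ⟨ω, _, hω⟩ := Finset.mem_image.mp hx
            refine Finset.mem_product.mpr ⟨?_, ?_⟩
            · exact Finset.mem_image.mpr ⟨ω, Finset.mem_univ ω, congrArg Prod.fst hω⟩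
            · exact Finset.mem_image.mpr ⟨ω, Finset.mem_univ ω, congrArg Prod.snd hω⟩
          · intro x _ _
            exact mul_nonneg (prob_nonneg p hp _) (prob_nonneg p hp _)
      _ = (∑ a ∈ Finset.univ.image A, prob p (fun ω => A ω = a)) *
            (∑ z ∈ Finset.univ.image Z, prob p (fun ω => Z ω = z)) := by
          rw [Finset.sum_mul_sum, Finset.sum_product]
      _ = 1 := by rw [sum_prob_image p hsum A, sum_prob_image p hsum Z, mul_one]
  have := sum_mul_logb_le p hp hsum f hf step3
  have hfin : condEntropy p A Z - entropy p A ≤ 0 := by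
    rw [step1, Finset.sum_congr rfl fun ω _ => step2 ω]
    exact this
  linarith

lemma entropy_le_expLen (hp : ∀ ω, 0 ≤ p ω) (hsum : ∑ ω, p ω = 1)
    (A : Ω → List Bool)
    (hpf : ∀ a₁ a₂ : List Bool, 0 < prob p (fun ω => A ω = a₁) →
      0 < prob p (fun ω => A ω = a₂) → a₁ ≠ a₂ → ¬ a₁ <+: a₂) :
    entropy p A ≤ expLen p A := by
  have hAu : entropy p A = condEntropy p A (fun _ : Ω => ()) := by
    rw [condEntropy]
    have h1 : entropy p (fun ω => (A ω, ())) = entropy p A :=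
      le_antisymm (entropy_mono p hp (fun ω ω' h => by simp [h]))
        (entropy_mono p hp (fun ω ω' h => by
          have := congrArg Prod.fst h
          simpa using this))
    have h2 : entropy p (fun _ : Ω => ()) = 0 := by
      rw [entropy_eq]
      have : prob p (fun _ : Ω => True) = 1 := by
        unfold prob; simpa using hsum
      simp only [eq_self_iff_true]
      rw [this]
      simp
    rw [h1, h2, sub_zero]
  rw [hAu]
  refine condEntropy_le_expLen p hp hsum A _ (fun z _ => ?_)
  have hQ : ∀ a, prob p (fun ω => A ω = a ∧ () = z) = prob p (fun ω => A ω = a) :=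
    fun a => prob_congr p (fun ω => by simp)
  calc ∑ a ∈ Finset.univ.image A,
        (if 0 < prob p (fun ω => A ω = a ∧ () = z) then ((2:ℝ)⁻¹) ^ a.length else 0)
      = ∑ a ∈ Finset.univ.image A,
        (if 0 < prob p (fun ω => A ω = a) then ((2:ℝ)⁻¹) ^ a.length else 0) := by
        exact Finset.sum_congr rfl fun a _ => by rw [hQ a]
    _ ≤ 1 := kraft_sum A (fun a => prob p (fun ω => A ω = a)) hpf


lemma condMutualInfo_le_condEntropy {γ' : Type} (hp : ∀ ω, 0 ≤ p ω)
    (X : Ω → α) (A : Ω → β) (Z : Ω → γ') :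
    condMutualInfo p X A Z ≤ condEntropy p A Z := by
  unfold condMutualInfo condEntropy
  have h1 : entropy p (fun ω => (X ω, Z ω)) ≤ entropy p (fun ω => (X ω, (A ω, Z ω))) :=
    entropy_mono p hp (fun ω ω' h => by
      simp only [Prod.mk.injEq] at h ⊢
      exact ⟨h.1, h.2.2⟩)
  linarith

end Aux
/-- Lemma 1 of the paper: prefix-free codewords (under either constraint) are lower
bounded in average length by the causally conditioned directed information. -/
theorem prefixFree_rate_lower_bound {Ω α γ δ : Type} [Fintype Ω]
    (p : Ω → ℝ) (hp : ∀ ω, 0 ≤ p ω) (hsum : ∑ ω, p ω = 1) (T : ℕ)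
    (X : ℕ → Ω → α) (A : ℕ → Ω → List Bool) (D : ℕ → Ω → γ) (U : ℕ → Ω → δ)
    (hpf : ∀ t ≤ T,
      (∀ a₁ a₂ : List Bool, 0 < prob p (fun ω => A t ω = a₁) →
        0 < prob p (fun ω => A t ω = a₂) → a₁ ≠ a₂ → ¬ a₁ <+: a₂) ∨
      (∀ (z : (Fin t → List Bool) × (Fin (t + 1) → γ) × (Fin t → δ)),
        ∀ a₁ a₂ : List Bool,
          0 < prob p (fun ω => A t ω = a₁ ∧ (hist A t ω, hist D (t + 1) ω, hist U t ω) = z) →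
          0 < prob p (fun ω => A t ω = a₂ ∧ (hist A t ω, hist D (t + 1) ω, hist U t ω) = z) →
          a₁ ≠ a₂ → ¬ a₁ <+: a₂)) :
    (1 / (T + 1 : ℝ)) * ∑ t ∈ Finset.range (T + 1), expLen p (A t) ≥
      (1 / (T + 1 : ℝ)) * ∑ t ∈ Finset.range (T + 1),
        condMutualInfo p (hist X (t + 1)) (A t)
          (fun ω => (hist A t ω, hist D (t + 1) ω, hist U t ω)) := by
  rw [ge_iff_le]
  have hT : (0:ℝ) ≤ 1 / (T + 1) := by positivity
  refine mul_le_mul_of_nonneg_left (Finset.sum_le_sum fun t ht => ?_) hT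
  have ht' : t ≤ T := Nat.lt_succ_iff.mp (Finset.mem_range.mp ht)
  refine le_trans (condMutualInfo_le_condEntropy p hp _ _ _) ?_
  rcases hpf t ht' with h | h
  · exact le_trans (condEntropy_le_entropy p hp hsum _ _) (entropy_le_expLen p hp hsum _ h)
  · refine condEntropy_le_expLen p hp hsum (A t) _ (fun z hz => ?_)
    exact kraft_sum (A t)
      (fun a => prob p (fun ω => A t ω = a ∧ (hist A t ω, hist D (t+1) ω, hist U t ω) = z))
      (h z)
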